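/- Let X be a pointed metric space containing a sequence (x_n) of pairwise distinct points in X \ {0} converging to some x ∈ X \ {0}. Then there is no f ∈ Lip_0(X) such that f(x_n)/d(x_n,0) = (−1)^n for all n ∈ ℕ; consequently, the sequence ((x_n, 0)) is not Lipschitz interpolating for Lip_0(X). -/

import Mathlib

/-- Let `X` be a pointed metric space with base point `z` containing a
sequence `(x n)` of pairwise distinct points of `X \ {z}` converging to some `w ≠ z`.
Then no Lipschitz function `f` with `f z = 0` satisfies `f (x n) / d(x n, z) = (−1)ⁿ`
for all `n`; consequently the sequence `((x n, z))` is not Lipschitz interpolating for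
`Lip₀(X)`. -/
theorem stmt5 {X : Type*} [MetricSpace X] (z : X) (x : ℕ → X) (w : X)
    (hinj : Function.Injective x) (hne : ∀ n, x n ≠ z) (hw : w ≠ z)
    (hlim : Filter.Tendsto x Filter.atTop (nhds w)) :
    (¬ ∃ f : X → ℝ, f z = 0 ∧ (∃ K : ℝ, ∀ a b : X, |f a - f b| ≤ K * dist a b) ∧
        ∀ n, f (x n) / dist (x n) z = (-1 : ℝ) ^ n) ∧
    ¬ (∀ α : ℕ → ℝ, (∃ C, ∀ n, |α n| ≤ C) →
        ∃ f : X → ℝ, f z = 0 ∧ (∃ K : ℝ, ∀ a b : X, |f a - f b| ≤ K * dist a b) ∧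
          ∀ n, (f (x n) - f z) / dist (x n) z = α n) := by
  have key : ¬ ∃ f : X → ℝ, f z = 0 ∧ (∃ K : ℝ, ∀ a b : X, |f a - f b| ≤ K * dist a b) ∧
      ∀ n, f (x n) / dist (x n) z = (-1 : ℝ) ^ n := by
    rintro ⟨f, hfz, ⟨K, hK⟩, hint⟩
    have hK0 : 0 ≤ K := by
      have h := hK (x 0) z
      have hd : 0 < dist (x 0) z := dist_pos.2 (hne 0)
      nlinarith [abs_nonneg (f (x 0) - f z)]
    have hlip : LipschitzWith ⟨K, hK0⟩ f := by
      apply LipschitzWith.of_dist_le_mul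
      intro a b
      show dist (f a) (f b) ≤ K * dist a b
      simpa [Real.dist_eq] using hK a b
    have hcf : Continuous f := hlip.continuous
    have hdw : dist w z ≠ 0 := dist_ne_zero.2 hw
    have h1 : Filter.Tendsto (fun n => f (x n) / dist (x n) z) Filter.atTop
        (nhds (f w / dist w z)) := by
      exact ((hcf.tendsto w).comp hlim).div
        (((continuous_dist.comp (continuous_id.prodMk continuous_const)).tendsto w).comp hlim)
        hdw
    have h2 : Filter.Tendsto (fun n => ((-1 : ℝ)) ^ n) Filter.atTop (nhds (f w / dist w z)) := by
      simpa [hint] using h1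
    have heven : Filter.Tendsto (fun n : ℕ => ((-1 : ℝ)) ^ (2 * n)) Filter.atTop
        (nhds (f w / dist w z)) :=
      h2.comp (Filter.tendsto_atTop_mono (fun n => by simp; omega) Filter.tendsto_id)
    have hodd : Filter.Tendsto (fun n : ℕ => ((-1 : ℝ)) ^ (2 * n + 1)) Filter.atTop
        (nhds (f w / dist w z)) :=
      h2.comp (Filter.tendsto_atTop_mono (fun n => by simp; omega) Filter.tendsto_id)
    have e1 : (f w / dist w z) = 1 := by
      have : Filter.Tendsto (fun _ : ℕ => (1 : ℝ)) Filter.atTop (nhds (f w / dist w z)) := by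
        simpa [pow_mul] using heven
      exact tendsto_nhds_unique this tendsto_const_nhds
    have e2 : (f w / dist w z) = -1 := by
      have : Filter.Tendsto (fun _ : ℕ => (-1 : ℝ)) Filter.atTop (nhds (f w / dist w z)) := by
        simpa [pow_succ, pow_mul] using hodd
      exact tendsto_nhds_unique this tendsto_const_nhds
    rw [e1] at e2
    norm_num at e2
  refine ⟨key, fun h => key ?_⟩
  obtain ⟨f, hfz, hlip, hint⟩ := h (fun n => (-1 : ℝ) ^ n) ⟨1, fun n => by
    rw [abs_pow]; norm_num⟩
  exact ⟨f, hfz, hlip, fun n => by simpa [hfz] using hint n⟩
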